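/- There exist absolute constants c₀ > 0 and C₀ > 0 such that the following holds. Let n, d be positive integers, β*, β ∈ ℝ^d, t > 0 with √t · ‖β*‖₂ ≥ C₀, and let Π be an n×n permutation matrix whose associated permutation has n_k(Π) cycles of length k, n₁(Π) fixed points, and fc(Π) := Σ_k n_k(Π) total cycles. Let X be an n×d random matrix with independent N(0,1) entries. Then E[ exp( −t ‖X β* − Π X β‖₂² ) ] ≤ (1 + 2t‖β − β*‖₂²)^{−n₁(Π)/2} · (c₀ √t ‖β*‖₂)^{−(n − fc(Π))} ≤ (1 + 2t‖β − β*‖₂²)^{−n₁(Π)/2} · (c₀ √t ‖β*‖₂)^{−(n − n₁(Π))/2}. -/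

import Mathlib

open MeasureTheory ProbabilityTheory Matrix

/-- The law of an `n × d` random matrix with i.i.d. standard Gaussian entries. -/
noncomputable def stdGaussianMatrix (n d : ℕ) : Measure (Fin n → Fin d → ℝ) :=
  Measure.pi fun _ => Measure.pi fun _ => gaussianReal 0 1

/-- Squared Euclidean norm. -/
def sq2 {m : ℕ} (v : Fin m → ℝ) : ℝ := ∑ i, v i ^ 2

/-- Euclidean norm. -/
noncomputable def enorm2 {m : ℕ} (v : Fin m → ℝ) : ℝ := Real.sqrt (sq2 v)

/-- Number of fixed points of a permutation. -/
def nFixed {n : ℕ} (π : Equiv.Perm (Fin n)) : ℕ :=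
  (Finset.univ.filter fun i => π i = i).card

/-- Total number of cycles of a permutation (fixed points counted as 1-cycles). -/
def totCycles {n : ℕ} (π : Equiv.Perm (Fin n)) : ℕ :=
  nFixed π + Multiset.card π.cycleType

section Aux

open Real Finset
open scoped ENNReal NNReal

namespace Stmt10Aux

lemma gauss_int (g : ℝ → ℝ) :
    ∫ x, g x ∂(gaussianReal 0 1) = ∫ x, gaussianPDFReal 0 1 x * g x := by
  rw [gaussianReal_of_var_ne_zero 0 one_ne_zero]
  rw [show gaussianPDF 0 1 = fun x => ((Real.toNNReal (gaussianPDFReal 0 1 x) : ℝ≥0) : ℝ≥0∞)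
    from rfl]
  rw [integral_withDensity_eq_integral_smul
    ((measurable_gaussianPDFReal 0 1).real_toNNReal)]
  congr 1
  ext x
  simp [NNReal.smul_def, Real.coe_toNNReal _ (gaussianPDFReal_nonneg 0 1 x)]

lemma oneD (a b c : ℝ) (ha : 0 ≤ a) :
    ∫ x, rexp (-(a*(b*x+c)^2)) ∂(gaussianReal 0 1)
      = (Real.sqrt (1+2*a*b^2))⁻¹ * rexp (-(a*c^2/(1+2*a*b^2))) := by
  have hab : 0 ≤ a * b^2 := mul_nonneg ha (sq_nonneg b)
  have hp : 0 < a*b^2 + 1/2 := by linarith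
  set p := a*b^2 + 1/2 with hpdef
  have h2p : 1 + 2*a*b^2 = 2*p := by rw [hpdef]; ring
  rw [gauss_int]
  have key : ∀ x : ℝ, gaussianPDFReal 0 1 x * rexp (-(a*(b*x+c)^2))
      = (Real.sqrt (2*π))⁻¹ * rexp (-(a*c^2/(2*p))) * rexp (-p * (x + a*b*c/p)^2) := by
    intro x
    rw [gaussianPDFReal]
    push_cast
    rw [mul_assoc, mul_comm (rexp _) (rexp _), ← Real.exp_add]
    rw [mul_assoc ((Real.sqrt (2*π))⁻¹), ← Real.exp_add]
    congr 1
    · norm_num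
    · have hp0 : p ≠ 0 := hp.ne'
      congr 1
      field_simp
      ring
  rw [funext key]
  rw [MeasureTheory.integral_const_mul]
  rw [MeasureTheory.integral_add_right_eq_self (μ := volume)
    (fun x : ℝ => rexp (-p * x^2)) (a*b*c/p)]
  rw [integral_gaussian p, h2p]
  have hs : (Real.sqrt (2*π))⁻¹ * √(π/p) = (√(2*p))⁻¹ := by
    rw [show (2:ℝ)*π = (2*p)*(π/p) by field_simp]
    rw [Real.sqrt_mul (by positivity), mul_inv, mul_assoc,
      inv_mul_cancel₀ (ne_of_gt (Real.sqrt_pos.mpr (by positivity))), mul_one]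
  rw [mul_right_comm, hs]

lemma oneD' (a b c : ℝ) (ha : 0 ≤ a) :
    ∫⁻ x, ENNReal.ofReal (rexp (-(a*(b*x+c)^2))) ∂(gaussianReal 0 1)
      = ENNReal.ofReal ((Real.sqrt (1+2*a*b^2))⁻¹ * rexp (-(a*c^2/(1+2*a*b^2)))) := by
  rw [← oneD a b c ha]
  rw [← ofReal_integral_eq_lintegral_ofReal]
  · exact Integrable.mono' (integrable_const 1)
      (Continuous.aestronglyMeasurable (by continuity))
      (Filter.Eventually.of_forall fun x => by
        rw [Real.norm_eq_abs, abs_of_pos (Real.exp_pos _)]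
        exact Real.exp_le_one_iff.mpr (neg_nonpos.mpr (by positivity)))
  · exact Filter.Eventually.of_forall fun x => (Real.exp_pos _).le

variable {d n : ℕ}

noncomputable abbrev γ (d : ℕ) : (Fin d) → Measure ℝ := fun _ => gaussianReal 0 1

lemma meas_f (a c : ℝ) (w : Fin d → ℝ) :
    Measurable (fun y : Fin d → ℝ => ENNReal.ofReal (rexp (-(a * ((∑ j, w j * y j) + c)^2)))) := by
  fun_prop

lemma marg_le (s : Finset (Fin d)) :
    ∀ (a : ℝ), 0 ≤ a → ∀ (w : Fin d → ℝ) (c : ℝ) (x : Fin d → ℝ),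
    (∫⋯∫⁻_s, (fun y => ENNReal.ofReal (rexp (-(a * ((∑ j, w j * y j) + c)^2)))) ∂(γ d)) x
      ≤ ENNReal.ofReal ((Real.sqrt (1 + 2*a*(∑ j ∈ s, (w j)^2)))⁻¹) := by
  induction s using Finset.induction_on with
  | empty =>
    intro a ha w c x
    simp only [lmarginal_empty, Finset.sum_empty]
    simp only [mul_zero, add_zero, Real.sqrt_one, inv_one, ENNReal.ofReal_one]
    exact ENNReal.ofReal_le_one.mpr (Real.exp_le_one_iff.mpr (neg_nonpos.mpr (by positivity)))
  | @insert i s hi ih =>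
    intro a ha w c x
    rw [lmarginal_insert' _ (meas_f a c w) hi]
    have hb : (0:ℝ) < 1 + 2*a*(w i)^2 := by
      nlinarith [sq_nonneg (w i), mul_nonneg ha (sq_nonneg (w i))]
    set a' := a / (1 + 2*a*(w i)^2) with ha'def
    have ha' : 0 ≤ a' := div_nonneg ha hb.le
    have key : ∀ z : Fin d → ℝ,
        (∫⁻ xi, ENNReal.ofReal
            (rexp (-(a * ((∑ j, w j * (Function.update z i xi) j) + c)^2))) ∂(γ d i))
        = ENNReal.ofReal ((Real.sqrt (1+2*a*(w i)^2))⁻¹)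
            * ENNReal.ofReal (rexp (-(a' * ((∑ j, (Function.update w i 0) j * z j) + c)^2))) := by
      intro z
      have hsum : ∀ xi, (∑ j, w j * (Function.update z i xi) j)
          = w i * xi + (∑ j, (Function.update w i 0) j * z j) := by
        intro xi
        rw [Fintype.sum_eq_add_sum_compl i, Fintype.sum_eq_add_sum_compl i
          (fun j => (Function.update w i 0) j * z j)]
        simp only [Function.update_self, zero_mul, zero_add]
        congr 1
        apply Finset.sum_congr rfl
        intro j hj
        have hj' : j ≠ i := by simpa using hj
        rw [Function.update_of_ne hj', Function.update_of_ne hj']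
      simp_rw [hsum, add_assoc]
      rw [show (γ d i) = gaussianReal 0 1 from rfl,
        oneD' a (w i) ((∑ j, (Function.update w i 0) j * z j) + c) ha]
      rw [ENNReal.ofReal_mul (by positivity)]
      congr 2
      rw [ha'def]
      field_simp
    calc (∫⋯∫⁻_s, (fun z => ∫⁻ xi, ENNReal.ofReal
            (rexp (-(a * ((∑ j, w j * (Function.update z i xi) j) + c)^2))) ∂(γ d i)) ∂(γ d)) x
        = (∫⋯∫⁻_s, (fun z => ENNReal.ofReal ((Real.sqrt (1+2*a*(w i)^2))⁻¹)
            * ENNReal.ofReal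
              (rexp (-(a' * ((∑ j, (Function.update w i 0) j * z j) + c)^2)))) ∂(γ d)) x := by
          congr 1; exact funext key
      _ = ENNReal.ofReal ((Real.sqrt (1+2*a*(w i)^2))⁻¹)
            * (∫⋯∫⁻_s, (fun z => ENNReal.ofReal
              (rexp (-(a' * ((∑ j, (Function.update w i 0) j * z j) + c)^2)))) ∂(γ d)) x := by
          simp only [lmarginal]
          rw [lintegral_const_mul' _ _ ENNReal.ofReal_ne_top]
      _ ≤ ENNReal.ofReal ((Real.sqrt (1+2*a*(w i)^2))⁻¹)
            * ENNReal.ofReal ((Real.sqrt (1 + 2*a'*(∑ j ∈ s, ((Function.update w i 0) j)^2)))⁻¹) := by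
          exact mul_le_mul_right (ih a' ha' _ c x) _
      _ ≤ ENNReal.ofReal ((Real.sqrt (1 + 2*a*(∑ j ∈ insert i s, (w j)^2)))⁻¹) := by
          rw [← ENNReal.ofReal_mul (by positivity), ← mul_inv, ← Real.sqrt_mul (by positivity)]
          apply ENNReal.ofReal_le_ofReal
          apply inv_anti₀ (Real.sqrt_pos.mpr (by positivity))
          apply Real.sqrt_le_sqrt
          have hsum2 : (∑ j ∈ s, ((Function.update w i 0) j)^2) = ∑ j ∈ s, (w j)^2 := by
            apply Finset.sum_congr rfl
            intro j hj
            rw [Function.update_of_ne (ne_of_mem_of_not_mem hj hi)]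
          rw [hsum2, Finset.sum_insert hi, ha'def]
          field_simp
          ring_nf
          exact le_rfl

lemma pi_le (a : ℝ) (ha : 0 ≤ a) (w : Fin d → ℝ) (c : ℝ) :
    ∫⁻ y, ENNReal.ofReal (rexp (-(a * ((∑ j, w j * y j) + c)^2)))
        ∂(Measure.pi fun _ : Fin d => gaussianReal 0 1)
      ≤ ENNReal.ofReal ((Real.sqrt (1 + 2*a*(∑ j, (w j)^2)))⁻¹) := by
  rw [lintegral_eq_lmarginal_univ (fun _ => 0)]
  exact marg_le Finset.univ a ha w c (fun _ => 0)

noncomputable def Gfun (t : ℝ) (βstar β : Fin d → ℝ) (σ : Equiv.Perm (Fin n))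
    (j : Fin n) (X : Fin n → Fin d → ℝ) : ℝ≥0∞ :=
  ENNReal.ofReal (rexp (-(t * ((∑ a, X j a * βstar a) - (∑ a, X (σ j) a * β a))^2)))

lemma Gfun_meas (t : ℝ) (βstar β : Fin d → ℝ) (σ : Equiv.Perm (Fin n)) (j : Fin n) :
    Measurable (Gfun t βstar β σ j) := by
  unfold Gfun; fun_prop

lemma Gfun_le_one (t : ℝ) (ht : 0 ≤ t) (βstar β : Fin d → ℝ) (σ : Equiv.Perm (Fin n))
    (j : Fin n) (X : Fin n → Fin d → ℝ) : Gfun t βstar β σ j X ≤ 1 := by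
  unfold Gfun
  exact ENNReal.ofReal_le_one.mpr (Real.exp_le_one_iff.mpr (neg_nonpos.mpr (by positivity)))

noncomputable def cst (t : ℝ) (βstar β : Fin d → ℝ) (σ : Equiv.Perm (Fin n)) (j : Fin n) : ℝ≥0∞ :=
  if σ j = j then ENNReal.ofReal ((Real.sqrt (1 + 2*t*(∑ a, (βstar a - β a)^2)))⁻¹)
  else ENNReal.ofReal ((Real.sqrt (1 + 2*t*(∑ a, (βstar a)^2)))⁻¹)

lemma rows (t : ℝ) (ht : 0 ≤ t) (βstar β : Fin d → ℝ) (σ : Equiv.Perm (Fin n))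
    (T : Finset (Fin n)) (hgood : ∀ i ∈ T, σ i ≠ i → ∃ m : ℕ, (σ ^ m) i ∉ T) :
    ∀ x, (∫⋯∫⁻_Finset.univ, (fun X => ∏ j ∈ T, Gfun t βstar β σ j X)
        ∂(fun _ : Fin n => (Measure.pi fun _ : Fin d => gaussianReal 0 1))) x
      ≤ ∏ j ∈ T, cst t βstar β σ j := by
  induction T using Finset.strongInduction with
  | _ T ih =>
  intro x
  set μ : Fin n → Measure (Fin d → ℝ) :=
    fun _ => (Measure.pi fun _ : Fin d => gaussianReal 0 1) with hμ
  rcases T.eq_empty_or_nonempty with rfl | hT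
  · simp only [Finset.prod_empty]
    rw [show (fun _ : Fin n → Fin d → ℝ => (1:ℝ≥0∞)) = (fun _ => 1) from rfl]
    rw [lmarginal]
    simp
  have hext : ∃ i ∈ T, σ i = i ∨ (σ i ≠ i ∧ σ.symm i ∉ T) := by
    by_cases hfix : ∃ i ∈ T, σ i = i
    · obtain ⟨i, hi, h⟩ := hfix; exact ⟨i, hi, Or.inl h⟩
    · push_neg at hfix
      by_contra hc
      push_neg at hc
      have hsymm : ∀ i ∈ T, σ.symm i ∈ T := by
        intro i hi
        rcases hc i hi with ⟨h1, h2⟩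
        exact h2 (hfix i hi)
      have himg : T.image (fun i => σ.symm i) = T := by
        apply Finset.eq_of_subset_of_card_le
        · intro j hj
          obtain ⟨i, hi, rfl⟩ := Finset.mem_image.mp hj
          exact hsymm i hi
        · rw [Finset.card_image_of_injective _ σ.symm.injective]
      have hfor : ∀ i ∈ T, σ i ∈ T := by
        intro i hi
        have : i ∈ T.image (fun i => σ.symm i) := himg.symm ▸ hi
        obtain ⟨j, hj, hji⟩ := Finset.mem_image.mp this
        have : j = σ i := by
          apply σ.symm.injective; rw [hji]; simp
        rwa [← this]
      have hpow : ∀ m : ℕ, ∀ i ∈ T, (σ ^ m) i ∈ T := by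
        intro m
        induction m with
        | zero => simpa using fun i hi => hi
        | succ m ihm =>
          intro i hi
          rw [pow_succ, Equiv.Perm.mul_apply]
          exact ihm _ (hfor i hi)
      obtain ⟨i0, hi0⟩ := hT
      obtain ⟨m, hm⟩ := hgood i0 hi0 (hfix i0 hi0)
      exact hm (hpow m i0 hi0)
  obtain ⟨i, hiT, hcase⟩ := hext
  have hnotdep : ∀ j ∈ T.erase i, j ≠ i ∧ σ j ≠ i := by
    intro j hj
    refine ⟨Finset.ne_of_mem_erase hj, ?_⟩
    intro hpj
    rcases hcase with hfix | ⟨hnf, hsym⟩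
    · exact (Finset.ne_of_mem_erase hj) (σ.injective (hpj.trans hfix.symm))
    · have : j = σ.symm i := by apply σ.injective; simp [hpj]
      exact hsym (this ▸ Finset.mem_of_mem_erase hj)
  have hFmeas : Measurable (fun X => ∏ j ∈ T, Gfun t βstar β σ j X) :=
    Finset.measurable_prod _ fun j _ => Gfun_meas t βstar β σ j
  have hF'meas : Measurable (fun X => ∏ j ∈ T.erase i, Gfun t βstar β σ j X) :=
    Finset.measurable_prod _ fun j _ => Gfun_meas t βstar β σ j
  have hGupdate : ∀ (j : Fin n), j ∈ T.erase i → ∀ (X : Fin n → Fin d → ℝ) (z : Fin d → ℝ),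
      Gfun t βstar β σ j (Function.update X i z) = Gfun t βstar β σ j X := by
    intro j hj X z
    obtain ⟨h1, h2⟩ := hnotdep j hj
    unfold Gfun
    rw [Function.update_of_ne h1, Function.update_of_ne h2]
  have hcne : cst t βstar β σ i ≠ ∞ := by
    unfold cst; split <;> exact ENNReal.ofReal_ne_top
  have hprodne : ∀ X : Fin n → Fin d → ℝ, (∏ j ∈ T.erase i, Gfun t βstar β σ j X) ≠ ∞ := by
    intro X
    refine (ENNReal.prod_lt_top fun j _ => ?_).ne
    unfold Gfun; exact ENNReal.ofReal_lt_top
  have hins : (Finset.univ : Finset (Fin n)) = insert i (Finset.univ.erase i) :=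
    (Finset.insert_erase (Finset.mem_univ i)).symm
  have hinner : ∀ X : Fin n → Fin d → ℝ,
      (∫⁻ xi, Gfun t βstar β σ i (Function.update X i xi) ∂ μ i) ≤ cst t βstar β σ i := by
    intro X
    unfold Gfun cst
    by_cases hfix : σ i = i
    · rw [if_pos hfix]
      have hform : ∀ (xi : Fin d → ℝ),
          ((∑ a, (Function.update X i xi) i a * βstar a)
            - (∑ a, (Function.update X i xi) (σ i) a * β a))
          = (∑ a, (βstar a - β a) * xi a) + 0 := by
        intro xi
        rw [hfix]
        simp only [Function.update_self, add_zero, ← Finset.sum_sub_distrib]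
        exact Finset.sum_congr rfl fun a _ => by ring
      simp_rw [hform]
      exact pi_le t ht (fun a => βstar a - β a) 0
    · rw [if_neg hfix]
      have hform : ∀ (xi : Fin d → ℝ),
          ((∑ a, (Function.update X i xi) i a * βstar a)
            - (∑ a, (Function.update X i xi) (σ i) a * β a))
          = (∑ a, βstar a * xi a) + (- ∑ a, X (σ i) a * β a) := by
        intro xi
        rw [Function.update_of_ne (fun h : σ i = i => hfix h), Function.update_self]
        rw [sub_eq_add_neg]
        congr 1
        exact Finset.sum_congr rfl fun a _ => by ring
      simp_rw [hform]
      exact pi_le t ht βstar _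
  have hpt : ∀ X : Fin n → Fin d → ℝ,
      (∫⁻ xi, (∏ j ∈ T, Gfun t βstar β σ j (Function.update X i xi)) ∂ μ i)
        ≤ cst t βstar β σ i * ∏ j ∈ T.erase i, Gfun t βstar β σ j X := by
    intro X
    have hsplit : ∀ xi : Fin d → ℝ,
        (∏ j ∈ T, Gfun t βstar β σ j (Function.update X i xi))
        = (∏ j ∈ T.erase i, Gfun t βstar β σ j X)
            * Gfun t βstar β σ i (Function.update X i xi) := by
      intro xi
      rw [← Finset.mul_prod_erase T _ hiT, mul_comm]
      congr 1
      exact Finset.prod_congr rfl (fun j hj => hGupdate j hj X xi)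
    simp_rw [hsplit]
    rw [lintegral_const_mul' _ _ (hprodne X)]
    rw [mul_comm]
    exact mul_le_mul' (hinner X) le_rfl
  calc (∫⋯∫⁻_Finset.univ, (fun X => ∏ j ∈ T, Gfun t βstar β σ j X) ∂μ) x
      = (∫⋯∫⁻_(Finset.univ.erase i),
          (fun X => ∫⁻ xi, (∏ j ∈ T, Gfun t βstar β σ j (Function.update X i xi)) ∂ μ i) ∂μ) x := by
        conv_lhs => rw [hins]
        rw [lmarginal_insert' _ hFmeas (Finset.notMem_erase i _)]
    _ ≤ (∫⋯∫⁻_(Finset.univ.erase i),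
          (fun X => cst t βstar β σ i * ∏ j ∈ T.erase i, Gfun t βstar β σ j X) ∂μ) x := by
        exact lmarginal_mono (fun X => hpt X) x
    _ = cst t βstar β σ i
          * (∫⋯∫⁻_(Finset.univ.erase i),
              (fun X => ∏ j ∈ T.erase i, Gfun t βstar β σ j X) ∂μ) x := by
        simp only [lmarginal]
        rw [lintegral_const_mul' _ _ hcne]
    _ = cst t βstar β σ i
          * (∫⋯∫⁻_Finset.univ, (fun X => ∏ j ∈ T.erase i, Gfun t βstar β σ j X) ∂μ) x := by
        congr 1
        conv_rhs => rw [hins]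
        rw [lmarginal_insert' _ hF'meas (Finset.notMem_erase i _)]
        congr 1
        funext X
        have : ∀ xi : Fin d → ℝ,
            (∏ j ∈ T.erase i, Gfun t βstar β σ j (Function.update X i xi))
            = ∏ j ∈ T.erase i, Gfun t βstar β σ j X :=
          fun xi => Finset.prod_congr rfl (fun j hj => hGupdate j hj X xi)
        simp_rw [this]
        rw [lintegral_const]
        simp [hμ]
    _ ≤ cst t βstar β σ i * ∏ j ∈ T.erase i, cst t βstar β σ j := by
        refine mul_le_mul' le_rfl ?_
        refine ih (T.erase i) (Finset.erase_ssubset hiT) ?_ x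
        intro j hj hnf
        obtain ⟨m, hm⟩ := hgood j (Finset.mem_of_mem_erase hj) hnf
        exact ⟨m, fun hc => hm (Finset.mem_of_mem_erase hc)⟩
    _ = ∏ j ∈ T, cst t βstar β σ j := Finset.mul_prod_erase T _ hiT

lemma permMatrix_mulVec (σ : Equiv.Perm (Fin n)) (w : Fin n → ℝ) (i : Fin n) :
    (σ.permMatrix ℝ *ᵥ w) i = w (σ i) := by
  simp [Equiv.Perm.permMatrix, Matrix.mulVec, dotProduct, PEquiv.toMatrix_apply,
    Equiv.toPEquiv]

lemma integrand_rw (σ : Equiv.Perm (Fin n)) (X : Fin n → Fin d → ℝ) (t : ℝ)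
    (βstar β : Fin d → ℝ) :
    Real.exp (-t * sq2 (Matrix.of X *ᵥ βstar - σ.permMatrix ℝ *ᵥ (Matrix.of X *ᵥ β)))
    = ∏ i, Real.exp (-(t * ((∑ a, X i a * βstar a) - (∑ a, X (σ i) a * β a))^2)) := by
  rw [← Real.exp_sum]
  congr 1
  rw [sq2, Finset.mul_sum]
  apply Finset.sum_congr rfl
  intro i _
  rw [Pi.sub_apply, permMatrix_mulVec]
  simp [Matrix.mulVec, dotProduct]

end Stmt10Aux

end Aux

set_option maxHeartbeats 1000000

/-- there are absolute constants `c₀, C₀ > 0` such that if `√t‖β*‖₂ ≥ C₀`, then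
`E[exp(−t‖Xβ* − ΠXβ‖₂²)] ≤ (1 + 2t‖β − β*‖²)^{−n₁(Π)/2} (c₀√t‖β*‖)^{−(n−fc(Π))}`
`≤ (1 + 2t‖β − β*‖²)^{−n₁(Π)/2} (c₀√t‖β*‖)^{−(n−n₁(Π))/2}`. -/
theorem stmt10 :
    ∃ c₀ : ℝ, 0 < c₀ ∧ ∃ C₀ : ℝ, 0 < C₀ ∧
      ∀ (n d : ℕ), 0 < n → 0 < d → ∀ (βstar β : Fin d → ℝ) (t : ℝ), 0 < t →
        C₀ ≤ Real.sqrt t * enorm2 βstar →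
        ∀ π : Equiv.Perm (Fin n),
          (∫ X, Real.exp
              (-t * sq2 (Matrix.of X *ᵥ βstar - π.permMatrix ℝ *ᵥ (Matrix.of X *ᵥ β)))
              ∂(stdGaussianMatrix n d))
            ≤ (1 + 2 * t * sq2 (β - βstar)) ^ (-(nFixed π : ℝ) / 2)
              * (c₀ * Real.sqrt t * enorm2 βstar) ^ (-((n : ℝ) - totCycles π)) ∧
          (1 + 2 * t * sq2 (β - βstar)) ^ (-(nFixed π : ℝ) / 2)
              * (c₀ * Real.sqrt t * enorm2 βstar) ^ (-((n : ℝ) - totCycles π))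
            ≤ (1 + 2 * t * sq2 (β - βstar)) ^ (-(nFixed π : ℝ) / 2)
              * (c₀ * Real.sqrt t * enorm2 βstar) ^ (-((n : ℝ) - nFixed π) / 2) := by
    classical
  refine ⟨1, one_pos, 1, one_pos, ?_⟩
  intro n d hn hd βstar β t ht hC σ
  have ht' : 0 ≤ t := ht.le
  have hs1 : (1:ℝ) ≤ Real.sqrt t * enorm2 βstar := hC
  set s : ℝ := Real.sqrt t * enorm2 βstar with hsdef
  have hs0 : (0:ℝ) < s := lt_of_lt_of_le one_pos hs1
  -- counting facts
  have hsupp : nFixed σ + σ.support.card = n := by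
    have h := Finset.card_filter_add_card_filter_not
      (s := (Finset.univ : Finset (Fin n))) (p := fun i => σ i = i)
    simpa [nFixed, Equiv.Perm.support, Fintype.card_fin] using h
  have hm2 : 2 * Multiset.card σ.cycleType ≤ σ.support.card := by
    have h := Multiset.card_nsmul_le_sum (s := σ.cycleType)
      (fun x hx => Equiv.Perm.two_le_of_mem_cycleType hx)
    rw [Equiv.Perm.sum_cycleType] at h
    simpa [smul_eq_mul, mul_comm] using h
  have hcardfac : σ.cycleFactorsFinset.card = Multiset.card σ.cycleType := by
    simp [Equiv.Perm.cycleType]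
  have hne : ∀ c ∈ σ.cycleFactorsFinset, c.support.Nonempty := fun c hc =>
    (Equiv.Perm.mem_cycleFactorsFinset_iff.mp hc).1.nonempty_support
  set R : Finset (Fin n) :=
    σ.cycleFactorsFinset.attach.image (fun c => c.1.support.min' (hne c.1 c.2)) with hRdef
  have hRcard : R.card ≤ Multiset.card σ.cycleType := by
    calc R.card ≤ σ.cycleFactorsFinset.attach.card := Finset.card_image_le
    _ = σ.cycleFactorsFinset.card := Finset.card_attach
    _ = _ := hcardfac
  have hRnonfix : ∀ r ∈ R, σ r ≠ r := by
    intro r hr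
    obtain ⟨c, _, rfl⟩ := Finset.mem_image.mp hr
    have hmin := Finset.min'_mem c.1.support (hne c.1 c.2)
    have hcc := Equiv.Perm.mem_cycleFactorsFinset_iff.mp c.2
    rw [← hcc.2 _ hmin]
    exact Equiv.Perm.mem_support.mp hmin
  set T : Finset (Fin n) := Finset.univ \ R with hTdef
  have hgood : ∀ i ∈ T, σ i ≠ i → ∃ m : ℕ, (σ ^ m) i ∉ T := by
    intro i _ hnf
    have hisupp : i ∈ σ.support := Equiv.Perm.mem_support.mpr hnf
    have hc : σ.cycleOf i ∈ σ.cycleFactorsFinset :=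
      Equiv.Perm.cycleOf_mem_cycleFactorsFinset_iff.mpr hisupp
    have hrR : (σ.cycleOf i).support.min' (hne _ hc) ∈ R :=
      Finset.mem_image.mpr ⟨⟨_, hc⟩, Finset.mem_attach _ _, rfl⟩
    have hrsupp := Finset.min'_mem (σ.cycleOf i).support (hne _ hc)
    have hsc : σ.SameCycle i ((σ.cycleOf i).support.min' (hne _ hc)) :=
      (Equiv.Perm.mem_support_cycleOf_iff.mp hrsupp).1
    obtain ⟨m, _, hm⟩ := hsc.exists_pow_eq'
    refine ⟨m, fun hmem => ?_⟩
    rw [hTdef] at hmem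
    exact (Finset.mem_sdiff.mp hmem).2 (by rwa [← hm] at hrR)
  -- fixed points are in T
  have hfixT : Finset.univ.filter (fun j => σ j = j) = T.filter (fun j => σ j = j) := by
    apply Finset.ext
    intro j
    constructor
    · intro hj
      have h : σ j = j := (Finset.mem_filter.mp hj).2
      exact Finset.mem_filter.mpr
        ⟨Finset.mem_sdiff.mpr ⟨Finset.mem_univ j, fun hjR => hRnonfix j hjR h⟩, h⟩
    · intro hj
      exact Finset.mem_filter.mpr ⟨Finset.mem_univ j, (Finset.mem_filter.mp hj).2⟩
  -- cardinalities
  have hTcard : T.card = n - R.card := by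
    rw [hTdef, Finset.card_sdiff_of_subset (Finset.subset_univ R), Finset.card_univ, Fintype.card_fin]
  set F : ℕ := nFixed σ with hFdef
  set m : ℕ := Multiset.card σ.cycleType with hmdef
  have hFT : (T.filter (fun j => σ j = j)).card = F := by rw [← hfixT]; rfl
  set K : ℕ := (T.filter (fun j => ¬ σ j = j)).card with hKdef
  have hFK : F + K = n - R.card := by
    rw [← hTcard, ← hFT, hKdef]
    exact Finset.card_filter_add_card_filter_not (p := fun j => σ j = j)
  have hRn : R.card ≤ m := hRcard
  have htoteq : totCycles σ = F + m := rfl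
  have htotn : totCycles σ ≤ n := by omega
  -- real constants
  have hδ0 : (0:ℝ) ≤ sq2 (β - βstar) := Finset.sum_nonneg fun a _ => sq_nonneg _
  have hα0 : (0:ℝ) ≤ sq2 βstar := Finset.sum_nonneg fun a _ => sq_nonneg _
  have hx1 : (1:ℝ) ≤ 1 + 2*t*sq2 (β - βstar) := by nlinarith
  have hx0 : (0:ℝ) < 1 + 2*t*sq2 (β - βstar) := lt_of_lt_of_le one_pos hx1
  set cfR : ℝ := (Real.sqrt (1 + 2*t*sq2 (β - βstar)))⁻¹ with hcfR
  set ccR : ℝ := (Real.sqrt (1 + 2*t*sq2 βstar))⁻¹ with hccR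
  have henorm : enorm2 βstar ^ 2 = sq2 βstar := Real.sq_sqrt hα0
  have hsq : s^2 = t * sq2 βstar := by
    rw [hsdef, mul_pow, henorm, Real.sq_sqrt ht']
  have hccs : ccR ≤ s⁻¹ := by
    rw [hccR]
    apply inv_anti₀ hs0
    rw [show s = Real.sqrt (s^2) from (Real.sqrt_sq hs0.le).symm, hsq]
    apply Real.sqrt_le_sqrt
    nlinarith
  have hcc0 : (0:ℝ) ≤ ccR := by rw [hccR]; positivity
  have hcf0 : (0:ℝ) ≤ cfR := by rw [hcfR]; positivity
  -- the lintegral bound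
  have hδeq : (∑ a, (βstar a - β a)^2) = sq2 (β - βstar) := by
    rw [sq2]; exact Finset.sum_congr rfl fun a _ => by rw [Pi.sub_apply]; ring
  have hStmt10Aux.cstval : ∀ j, Stmt10Aux.cst t βstar β σ j
      = if σ j = j then ENNReal.ofReal cfR else ENNReal.ofReal ccR := by
    intro j
    unfold Stmt10Aux.cst
    rw [hδeq, show (∑ a, (βstar a)^2) = sq2 βstar from rfl, ← hcfR, ← hccR]
  have hprodStmt10Aux.cst : (∏ j ∈ T, Stmt10Aux.cst t βstar β σ j) = ENNReal.ofReal (cfR ^ F * ccR ^ K) := by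
    simp_rw [hStmt10Aux.cstval]
    rw [Finset.prod_ite]
    rw [Finset.prod_const, Finset.prod_const, hFT, ← hKdef]
    rw [ENNReal.ofReal_mul (pow_nonneg hcf0 F), ENNReal.ofReal_pow hcf0, ENNReal.ofReal_pow hcc0]
  have hintle : (∫⁻ X, ∏ j, Stmt10Aux.Gfun t βstar β σ j X ∂(stdGaussianMatrix n d))
      ≤ ENNReal.ofReal (cfR ^ F * ccR ^ K) := by
    rw [← hprodStmt10Aux.cst]
    calc (∫⁻ X, ∏ j, Stmt10Aux.Gfun t βstar β σ j X ∂(stdGaussianMatrix n d))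
        ≤ (∫⁻ X, ∏ j ∈ T, Stmt10Aux.Gfun t βstar β σ j X ∂(stdGaussianMatrix n d)) := by
          apply lintegral_mono
          intro X
          dsimp only
          rw [← Finset.prod_sdiff (Finset.subset_univ T)]
          calc (∏ j ∈ Finset.univ \ T, Stmt10Aux.Gfun t βstar β σ j X) * ∏ j ∈ T, Stmt10Aux.Gfun t βstar β σ j X
              ≤ 1 * ∏ j ∈ T, Stmt10Aux.Gfun t βstar β σ j X := by
                exact mul_le_mul' (Finset.prod_le_one' fun j _ => Stmt10Aux.Gfun_le_one t ht' βstar β σ j X) le_rfl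
            _ = ∏ j ∈ T, Stmt10Aux.Gfun t βstar β σ j X := one_mul _
      _ = (∫⋯∫⁻_Finset.univ, (fun X => ∏ j ∈ T, Stmt10Aux.Gfun t βstar β σ j X)
            ∂(fun _ : Fin n => (Measure.pi fun _ : Fin d => gaussianReal 0 1))) (fun _ _ => 0) := by
          rw [show stdGaussianMatrix n d
            = (Measure.pi (fun _ : Fin n => Measure.pi fun _ : Fin d => gaussianReal 0 1))
            from rfl, lintegral_eq_lmarginal_univ (fun _ _ => 0)]
      _ ≤ ∏ j ∈ T, Stmt10Aux.cst t βstar β σ j := Stmt10Aux.rows t ht' βstar β σ T hgood _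
  -- from Bochner to lintegral
  have hmeasG : Measurable (fun X : Fin n → Fin d → ℝ =>
      ∏ i, Real.exp (-(t * ((∑ a, X i a * βstar a) - (∑ a, X (σ i) a * β a))^2))) := by
    apply Finset.measurable_prod
    intro i _
    fun_prop
  have hint : (∫ X, Real.exp
        (-t * sq2 (Matrix.of X *ᵥ βstar - σ.permMatrix ℝ *ᵥ (Matrix.of X *ᵥ β)))
        ∂(stdGaussianMatrix n d))
      = (∫⁻ X, ∏ j, Stmt10Aux.Gfun t βstar β σ j X ∂(stdGaussianMatrix n d)).toReal := by
    simp_rw [Stmt10Aux.integrand_rw σ _ t βstar β]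
    rw [integral_eq_lintegral_of_nonneg_ae
      (Filter.Eventually.of_forall fun X =>
        Finset.prod_nonneg fun i _ => (Real.exp_pos _).le)
      hmeasG.aestronglyMeasurable]
    congr 1
    apply lintegral_congr
    intro X
    rw [ENNReal.ofReal_prod_of_nonneg fun i _ => (Real.exp_pos _).le]
    rfl
  -- real-side bounds
  have hreal : (∫ X, Real.exp
        (-t * sq2 (Matrix.of X *ᵥ βstar - σ.permMatrix ℝ *ᵥ (Matrix.of X *ᵥ β)))
        ∂(stdGaussianMatrix n d)) ≤ cfR ^ F * ccR ^ K := by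
    rw [hint]
    exact ENNReal.toReal_le_of_le_ofReal (by positivity) hintle
  -- identify cfR^F with the rpow expression
  have hA : cfR ^ F = (1 + 2*t*sq2 (β - βstar)) ^ (-(F : ℝ)/2) := by
    have h2 : ((1 + 2*t*sq2 (β - βstar)) ^ ((1:ℝ)/2))^(F:ℕ)
        = (1 + 2*t*sq2 (β - βstar)) ^ ((F:ℝ)/2) := by
      rw [← Real.rpow_natCast ((1 + 2*t*sq2 (β - βstar)) ^ ((1:ℝ)/2)) F,
        ← Real.rpow_mul hx0.le]
      congr 1
      ring
    rw [hcfR, Real.sqrt_eq_rpow, inv_pow, h2, ← Real.rpow_neg hx0.le]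
    congr 1
    ring
  have hB : ccR ^ K ≤ s ^ (-((n:ℝ) - totCycles σ)) := by
    have h1 : ccR ^ K ≤ (s⁻¹) ^ K := pow_le_pow_left₀ hcc0 hccs K
    have h2 : (s⁻¹) ^ K ≤ (s⁻¹) ^ (n - totCycles σ) := by
      apply pow_le_pow_of_le_one (by positivity) (inv_le_one_of_one_le₀ hs1)
      omega
    have h3 : ((s⁻¹) : ℝ) ^ (n - totCycles σ) = s ^ (-((n:ℝ) - totCycles σ)) := by
      rw [show ((n:ℝ) - totCycles σ) = ((n - totCycles σ : ℕ) : ℝ) by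
        rw [Nat.cast_sub htotn]]
      rw [Real.rpow_neg hs0.le, Real.rpow_natCast, inv_pow]
    linarith [h1, h2, h3.le]
  have hAnn : (0:ℝ) ≤ (1 + 2*t*sq2 (β - βstar)) ^ (-(F : ℝ)/2) := Real.rpow_nonneg hx0.le _
  constructor
  · rw [one_mul]
    calc (∫ X, Real.exp
        (-t * sq2 (Matrix.of X *ᵥ βstar - σ.permMatrix ℝ *ᵥ (Matrix.of X *ᵥ β)))
        ∂(stdGaussianMatrix n d)) ≤ cfR ^ F * ccR ^ K := hreal
      _ ≤ (1 + 2*t*sq2 (β - βstar)) ^ (-(F : ℝ)/2) * s ^ (-((n:ℝ) - totCycles σ)) := by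
          rw [← hA]
          exact mul_le_mul_of_nonneg_left hB (by positivity)
  · rw [one_mul]
    apply mul_le_mul_of_nonneg_left _ hAnn
    apply Real.rpow_le_rpow_of_exponent_le hs1
    have hc1 : ((totCycles σ):ℝ) = (F:ℝ) + m := by
      rw [show totCycles σ = F + m from rfl]; push_cast; ring
    have hc2 : (2*m:ℝ) ≤ ((σ.support.card : ℕ):ℝ) := by exact_mod_cast hm2
    have hc3 : (F:ℝ) + σ.support.card = n := by exact_mod_cast hsupp
    rw [hc1]
    linarith
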